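/- Let K ≥ 2 and suppose u_1,…,u_K : (0,∞) → ℝ are twice differentiable, satisfy the radial affine Toda system, satisfy ∑_{i=1}^K u_i(ρ) = 0 for all ρ > 0, and each u_i is bounded on [1,∞). Then ∑_{i=1}^K u_i(ρ)² decays exponentially at infinity: there exist constants C > 0, c > 0 and R > 0 such that ∑_{i=1}^K u_i(ρ)² ≤ C·e^{−cρ} for all ρ ≥ R. -/

import Mathlib

open scoped BigOperators

/-- Cyclic successor on `Fin K`. -/
def cycSucc {K : ℕ} (i : Fin K) : Fin K := ⟨((i : ℕ) + 1) % K, Nat.mod_lt _ i.pos⟩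

/-- Cyclic predecessor on `Fin K`. -/
def cycPred {K : ℕ} (i : Fin K) : Fin K := ⟨((i : ℕ) + (K - 1)) % K, Nat.mod_lt _ i.pos⟩

lemma cycPred_cycSucc {K : ℕ} (i : Fin K) : cycPred (cycSucc i) = i := by
  have hK := i.pos
  have hi := i.isLt
  apply Fin.ext
  show (((i : ℕ) + 1) % K + (K - 1)) % K = i
  rcases Nat.lt_or_ge ((i:ℕ)+1) K with h | h
  · rw [Nat.mod_eq_of_lt h]
    have : (i:ℕ) + 1 + (K-1) = (i:ℕ) + K := by omega
    rw [this, Nat.add_mod_right, Nat.mod_eq_of_lt hi]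
  · have h1 : (i:ℕ) + 1 = K := by omega
    rw [h1, Nat.mod_self, Nat.zero_add, Nat.mod_eq_of_lt (by omega)]
    omega

lemma cycSucc_bijective {K : ℕ} : Function.Bijective (cycSucc (K := K)) := by
  have hinj : Function.Injective (cycSucc (K := K)) := by
    intro a b h
    have := congrArg cycPred h
    rwa [cycPred_cycSucc, cycPred_cycSucc] at this
  exact Finite.injective_iff_bijective.mp hinj

lemma sum_cycSucc {K : ℕ} (f : Fin K → ℝ) : ∑ i, f (cycSucc i) = ∑ i, f i :=
  Fintype.sum_bijective cycSucc cycSucc_bijective _ _ (fun _ => rfl)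

lemma cycSucc_iterate_val {K : ℕ} (a : Fin K) (n : ℕ) :
    ((cycSucc^[n] a : Fin K) : ℕ) = ((a : ℕ) + n) % K := by
  induction n with
  | zero => simp [Nat.mod_eq_of_lt a.isLt]
  | succ n ih =>
    rw [Function.iterate_succ_apply']
    show ((cycSucc^[n] a : ℕ) + 1) % K = _
    rw [ih, Nat.mod_add_mod, Nat.add_assoc]

lemma exists_iterate {K : ℕ} (a b : Fin K) : ∃ n < K, cycSucc^[n] a = b := by
  refine ⟨(K - (a:ℕ) + (b:ℕ)) % K, Nat.mod_lt _ a.pos, ?_⟩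
  apply Fin.ext
  rw [cycSucc_iterate_val, Nat.add_mod_mod]
  have ha := a.isLt
  have : (a:ℕ) + (K - (a:ℕ) + (b:ℕ)) = K + (b:ℕ) := by omega
  rw [this, Nat.add_mod_left, Nat.mod_eq_of_lt b.isLt]

lemma diff_le_sum_abs {K : ℕ} (v : Fin K → ℝ) (a b : Fin K) :
    |v a - v b| ≤ ∑ j, |v (cycSucc j) - v j| := by
  obtain ⟨n, hn, hab⟩ := exists_iterate b a
  have htel : v a - v b = ∑ l ∈ Finset.range n, (v (cycSucc^[l+1] b) - v (cycSucc^[l] b)) := by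
    rw [Finset.sum_range_sub (fun l => v (cycSucc^[l] b)), hab]
    simp
  rw [htel]
  calc |∑ l ∈ Finset.range n, (v (cycSucc^[l+1] b) - v (cycSucc^[l] b))|
      ≤ ∑ l ∈ Finset.range n, |v (cycSucc^[l+1] b) - v (cycSucc^[l] b)| :=
        Finset.abs_sum_le_sum_abs _ _
    _ = ∑ l ∈ Finset.range n, (fun j => |v (cycSucc j) - v j|) (cycSucc^[l] b) := by
        refine Finset.sum_congr rfl (fun l _ => ?_)
        rw [Function.iterate_succ_apply']
    _ = ∑ j ∈ (Finset.range n).image (fun l => cycSucc^[l] b), |v (cycSucc j) - v j| := by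
        rw [Finset.sum_image]
        intro x hx y hy hxy
        simp only [Finset.mem_coe, Finset.mem_range] at hx hy
        have hvx : ((cycSucc^[x] b : Fin K) : ℕ) = ((cycSucc^[y] b : Fin K) : ℕ) := by exact congrArg Fin.val hxy
        rw [cycSucc_iterate_val, cycSucc_iterate_val] at hvx
        have hmod : x % K = y % K := Nat.ModEq.add_left_cancel' (b:ℕ) hvx
        rwa [Nat.mod_eq_of_lt (lt_trans hx hn), Nat.mod_eq_of_lt (lt_trans hy hn)] at hmod
    _ ≤ ∑ j, |v (cycSucc j) - v j| := by
        apply Finset.sum_le_sum_of_subset_of_nonneg (Finset.subset_univ _)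
        intro i _ _
        exact abs_nonneg _

lemma poincare {K : ℕ} (hK : 2 ≤ K) (v : Fin K → ℝ) (hv : ∑ i, v i = 0) :
    ∑ i, v i ^ 2 ≤ (K:ℝ)^2 * ∑ i, (v (cycSucc i) - v i)^2 := by
  set S := ∑ j, |v (cycSucc j) - v j| with hS
  have hSnonneg : 0 ≤ S := Finset.sum_nonneg (fun j _ => abs_nonneg _)
  have hne : (Finset.univ : Finset (Fin K)).Nonempty := by
    refine ⟨⟨0, by omega⟩, Finset.mem_univ _⟩
  have hjm : ∃ j : Fin K, v j ≤ 0 := by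
    by_contra h
    push_neg at h
    have : 0 < ∑ i, v i := Finset.sum_pos (fun i _ => h i) hne
    linarith [hv]
  have hjp : ∃ j : Fin K, 0 ≤ v j := by
    by_contra h
    push_neg at h
    have : ∑ i, v i < 0 := Finset.sum_neg (fun i _ => h i) hne
    linarith [hv]
  obtain ⟨jm, hjm⟩ := hjm
  obtain ⟨jp, hjp⟩ := hjp
  have habs : ∀ i, |v i| ≤ S := by
    intro i
    rcases le_or_gt 0 (v i) with h | h
    · have := diff_le_sum_abs v i jm
      rw [abs_of_nonneg h]
      calc v i ≤ v i - v jm := by linarith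
        _ ≤ |v i - v jm| := le_abs_self _
        _ ≤ S := this
    · have := diff_le_sum_abs v jp i
      rw [abs_of_neg h]
      calc -v i ≤ v jp - v i := by linarith
        _ ≤ |v jp - v i| := le_abs_self _
        _ ≤ S := this
  have h1 : ∑ i, v i ^ 2 ≤ (K:ℝ) * S^2 := by
    calc ∑ i, v i ^ 2 ≤ ∑ _i : Fin K, S^2 := by
          refine Finset.sum_le_sum (fun i _ => ?_)
          rw [← sq_abs (v i)]
          exact pow_le_pow_left₀ (abs_nonneg _) (habs i) 2
      _ = (K:ℝ) * S^2 := by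
          rw [Finset.sum_const, Finset.card_univ, Fintype.card_fin, nsmul_eq_mul]
  have h2 : S^2 ≤ (K:ℝ) * ∑ i, (v (cycSucc i) - v i)^2 := by
    have := sq_sum_le_card_mul_sum_sq (s := (Finset.univ : Finset (Fin K)))
      (f := fun j => |v (cycSucc j) - v j|)
    simp only [sq_abs] at this
    rw [hS]
    simpa [Finset.card_univ] using this
  calc ∑ i, v i ^ 2 ≤ (K:ℝ) * S^2 := h1
    _ ≤ (K:ℝ) * ((K:ℝ) * ∑ i, (v (cycSucc i) - v i)^2) := by
        apply mul_le_mul_of_nonneg_left h2 (by positivity)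
    _ = (K:ℝ)^2 * ∑ i, (v (cycSucc i) - v i)^2 := by ring

open Filter Set Topology in
lemma deriv2_nonpos_of_isLocalMax {f : ℝ → ℝ} {x : ℝ}
    (hf : ∀ᶠ y in nhds x, DifferentiableAt ℝ f y)
    (hf' : DifferentiableAt ℝ (deriv f) x)
    (hmax : IsLocalMax f x) : deriv (deriv f) x ≤ 0 := by
  by_contra hpos
  push_neg at hpos
  have h0 : deriv f x = 0 := hmax.deriv_eq_zero
  have hslope : Tendsto (slope (deriv f) x) (𝓝[≠] x) (𝓝 (deriv (deriv f) x)) := by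
    rw [← hasDerivAt_iff_tendsto_slope]
    exact hf'.hasDerivAt
  have hev : ∀ᶠ y in 𝓝[≠] x, 0 < slope (deriv f) x y :=
    hslope.eventually (eventually_gt_nhds hpos)
  have hev' : ∀ᶠ y in 𝓝[>] x, 0 < deriv f y := by
    have := hev.filter_mono (nhdsWithin_mono x (fun y (hy : x < y) => ne_of_gt hy))
    filter_upwards [this, self_mem_nhdsWithin] with y h hy
    rw [slope_def_field] at h
    have hy' : (0:ℝ) < y - x := sub_pos.2 hy
    have h2 : 0 < deriv f y - deriv f x := by
      have := mul_pos h hy'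
      rwa [div_mul_cancel₀] at this
      exact ne_of_gt hy'
    linarith [h0]
  have hdiff2 : ∀ᶠ y in 𝓝[>] x, DifferentiableAt ℝ f y := hf.filter_mono nhdsWithin_le_nhds
  have hmax2 : ∀ᶠ y in 𝓝[>] x, f y ≤ f x := hmax.filter_mono nhdsWithin_le_nhds
  have hall := (hev'.and (hdiff2.and hmax2))
  rw [eventually_iff, mem_nhdsGT_iff_exists_Ioo_subset] at hall
  obtain ⟨b, hb, hIoo⟩ := hall
  have hbx : x < b := hb
  set m := (x + b) / 2 with hm
  have hmx : x < m := by simp [hm]; linarith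
  have hmb : m < b := by simp [hm]; linarith
  have hmono : StrictMonoOn f (Icc x m) := by
    apply strictMonoOn_of_deriv_pos (convex_Icc x m)
    · intro y hy
      rcases eq_or_lt_of_le hy.1 with rfl | hxy
      · exact (hf.self_of_nhds).continuousAt.continuousWithinAt
      · exact ((hIoo ⟨hxy, lt_of_le_of_lt hy.2 hmb⟩).2.1).continuousAt.continuousWithinAt
    · intro y hy
      rw [interior_Icc] at hy
      exact (hIoo ⟨hy.1, lt_trans hy.2 hmb⟩).1
  have h1 : f x < f m := hmono (left_mem_Icc.2 (le_of_lt hmx)) (right_mem_Icc.2 (le_of_lt hmx)) hmx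
  have h2 : f m ≤ f x := (hIoo ⟨hmx, hmb⟩).2.2
  linarith

lemma x_mul_exp_sub_one {A x : ℝ} (h : |x| ≤ A) :
    Real.exp (-A) * x ^ 2 ≤ x * (Real.exp x - 1) := by
  have hA : 0 ≤ A := le_trans (abs_nonneg x) h
  rcases le_or_gt 0 x with hx | hx
  · have h1 : x + 1 ≤ Real.exp x := Real.add_one_le_exp x
    have h2 : Real.exp (-A) ≤ 1 := Real.exp_le_one_iff.2 (by linarith)
    nlinarith [sq_nonneg x]
  · have h1 : (-x) + 1 ≤ Real.exp (-x) := Real.add_one_le_exp (-x)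
    have h2 : Real.exp (-A) ≤ Real.exp x := Real.exp_le_exp.2 (by
      rw [abs_of_neg hx] at h; linarith)
    have h3 : Real.exp x * Real.exp (-x) = 1 := by
      rw [← Real.exp_add]; simp
    have hstep : Real.exp x * (-x + 1) ≤ 1 := by
      calc Real.exp x * (-x + 1) ≤ Real.exp x * Real.exp (-x) :=
            mul_le_mul_of_nonneg_left h1 (Real.exp_pos x).le
        _ = 1 := h3
    have h4 : Real.exp x - 1 ≤ x * Real.exp x := by nlinarith
    nlinarith [mul_le_mul_of_nonneg_left h2 (sq_nonneg x), mul_le_mul_of_nonpos_left h4 hx.le]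

open Real Filter Set Topology in
lemma decay_of_diff_ineq {F : ℝ → ℝ} {μ M c : ℝ} (hμ : 0 < μ) (hM : 0 < M)
    (hc : 0 < c) (hc2 : c ^ 2 + c ≤ μ)
    (hdiff : ∀ ρ : ℝ, 0 < ρ → DifferentiableAt ℝ F ρ ∧ DifferentiableAt ℝ (deriv F) ρ)
    (hineq : ∀ ρ : ℝ, 1 ≤ ρ → μ * F ρ ≤ deriv (deriv F) ρ + (1 / ρ) * deriv F ρ)
    (hbound : ∀ ρ : ℝ, 1 ≤ ρ → F ρ ≤ M) :
    ∀ ρ : ℝ, 1 ≤ ρ → F ρ ≤ (M * Real.exp c) * Real.exp (-c * ρ) := by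
  intro ρ hρ
  have hexp_eq : (M * Real.exp c) * Real.exp (-c * ρ) = M * Real.exp (c - c * ρ) := by
    rw [mul_assoc, ← Real.exp_add]; ring_nf
  rw [hexp_eq]
  refine le_of_forall_pos_le_add ?_
  intro δ hδ
  set ε := δ / Real.exp (c * ρ) with hε_def
  have hε : 0 < ε := div_pos hδ (Real.exp_pos _)
  -- the comparison function and its derivatives
  set G : ℝ → ℝ := fun σ => M * Real.exp (c - c * σ) + ε * Real.exp (c * σ) with hG_def
  set G1 : ℝ → ℝ := fun σ => M * (Real.exp (c - c * σ) * (-c)) + ε * (Real.exp (c * σ) * c)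
    with hG1_def
  set G2 : ℝ → ℝ := fun σ => M * (Real.exp (c - c * σ) * (-c) * (-c)) + ε * (Real.exp (c * σ) * c * c)
    with hG2_def
  have hinner1 : ∀ σ : ℝ, HasDerivAt (fun t => c - c * t) (-c) σ := by
    intro σ
    have : HasDerivAt (fun t : ℝ => c * t) (c * 1) σ := (hasDerivAt_id σ).const_mul c
    simpa using this.const_sub c
  have hinner2 : ∀ σ : ℝ, HasDerivAt (fun t : ℝ => c * t) c σ := by
    intro σ
    have : HasDerivAt (fun t : ℝ => c * t) (c * 1) σ := (hasDerivAt_id σ).const_mul c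
    simpa using this
  have hGd : ∀ σ : ℝ, HasDerivAt G (G1 σ) σ := by
    intro σ
    exact (((hinner1 σ).exp).const_mul M).add (((hinner2 σ).exp).const_mul ε)
  have hG1d : ∀ σ : ℝ, HasDerivAt G1 (G2 σ) σ := by
    intro σ
    have t1 : HasDerivAt (fun t => Real.exp (c - c * t) * (-c)) (Real.exp (c - c * σ) * (-c) * (-c)) σ :=
      ((hinner1 σ).exp).mul_const (-c)
    have t2 : HasDerivAt (fun t => Real.exp (c * t) * c) (Real.exp (c * σ) * c * c) σ :=
      ((hinner2 σ).exp).mul_const c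
    exact (t1.const_mul M).add (t2.const_mul ε)
  have hderivG : deriv G = G1 := funext fun σ => (hGd σ).deriv
  have hderivG1 : deriv G1 = G2 := funext fun σ => (hG1d σ).deriv
  have hGdiff : Differentiable ℝ G := fun σ => (hGd σ).differentiableAt
  have hG1diff : Differentiable ℝ G1 := fun σ => (hG1d σ).differentiableAt
  have hGcont : Continuous G := hGdiff.continuous
  -- the comparison inequality for G
  have hcomp : ∀ σ : ℝ, 1 ≤ σ → G2 σ + (1 / σ) * G1 σ ≤ μ * G σ := by
    intro σ hσ
    have hσ0 : 0 < σ := lt_of_lt_of_le one_pos hσ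
    have hr1 : 0 < 1 / σ := by positivity
    have hr2 : 1 / σ ≤ 1 := by rw [div_le_one hσ0]; exact hσ
    have e1 : 0 < Real.exp (c - c * σ) := Real.exp_pos _
    have e2 : 0 < Real.exp (c * σ) := Real.exp_pos _
    have k1 : c ^ 2 - c * (1 / σ) ≤ μ := by nlinarith
    have k2 : c ^ 2 + c * (1 / σ) ≤ μ := by nlinarith
    have m1 := mul_le_mul_of_nonneg_left k1 (mul_pos hM e1).le
    have m2 := mul_le_mul_of_nonneg_left k2 (mul_pos hε e2).le
    simp only [hG_def, hG1_def, hG2_def]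
    nlinarith [m1, m2]
  -- claim : F ≤ G on [1, ∞)
  have key : ∀ σ : ℝ, 1 ≤ σ → F σ ≤ G σ := by
    by_contra hcon
    push_neg at hcon
    obtain ⟨ρ₂, hρ₂1, hρ₂⟩ := hcon
    set h : ℝ → ℝ := fun σ => F σ - G σ with hh_def
    have hh2 : 0 < h ρ₂ := sub_pos.2 hρ₂
    set T : ℝ := max ρ₂ ((M + 1) / (ε * c)) with hT_def
    have hT1 : 1 ≤ T := le_trans hρ₂1 (le_max_left _ _)
    have hρ₂T : ρ₂ ≤ T := le_max_left _ _
    have hcont : ContinuousOn h (Icc 1 T) := by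
      intro y hy
      have hy0 : 0 < y := lt_of_lt_of_le one_pos hy.1
      exact (((hdiff y hy0).1.continuousAt).sub (hGcont.continuousAt)).continuousWithinAt
    obtain ⟨ρ₀, hρ₀mem, hρ₀max⟩ :=
      isCompact_Icc.exists_isMaxOn (Set.nonempty_Icc.2 hT1) hcont
    have hmax2 : 0 < h ρ₀ := lt_of_lt_of_le hh2 (hρ₀max ⟨hρ₂1, hρ₂T⟩)
    -- h 1 < 0
    have hG1val : M < G 1 := by
      have : G 1 = M * Real.exp (c - c * 1) + ε * Real.exp (c * 1) := rfl
      rw [this]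
      have : c - c * 1 = 0 := by ring
      rw [this, Real.exp_zero]
      nlinarith [Real.exp_pos (c * 1)]
    have h1neg : h 1 < 0 := by
      have := hbound 1 le_rfl
      simp only [hh_def]
      linarith
    -- h T < 0
    have hTneg : h T < 0 := by
      have hcε : 0 < ε * c := mul_pos hε hc
      have hT2 : (M + 1) / (ε * c) ≤ T := le_max_right _ _
      have h3 : M + 1 ≤ ε * c * T := by
        rw [div_le_iff₀ hcε] at hT2
        linarith
      have h4 : 1 + c * T ≤ Real.exp (c * T) := by
        have := Real.add_one_le_exp (c * T)
        linarith
      have h5 : ε * (1 + c * T) ≤ ε * Real.exp (c * T) :=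
        mul_le_mul_of_nonneg_left h4 hε.le
      have h6 : M + 1 ≤ ε * Real.exp (c * T) := by nlinarith
      have h7 : 0 < M * Real.exp (c - c * T) := mul_pos hM (Real.exp_pos _)
      have h8 := hbound T hT1
      simp only [hh_def, hG_def]
      nlinarith
    have hρ₀1 : 1 < ρ₀ := by
      rcases eq_or_lt_of_le hρ₀mem.1 with heq | hlt
      · exfalso; rw [← heq] at hmax2; linarith
      · exact hlt
    have hρ₀T : ρ₀ < T := by
      rcases eq_or_lt_of_le hρ₀mem.2 with heq | hlt
      · exfalso; rw [heq] at hmax2; linarith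
      · exact hlt
    have hρ₀0 : 0 < ρ₀ := lt_trans one_pos hρ₀1
    have hlocal : IsLocalMax h ρ₀ := hρ₀max.isLocalMax (Icc_mem_nhds hρ₀1 hρ₀T)
    -- derivative facts
    have hderiv_eq : ∀ y ∈ Ioi (0:ℝ), deriv h y = deriv F y - G1 y := by
      intro y hy
      simp only [hh_def]
      rw [deriv_fun_sub (hdiff y hy).1 (hGdiff y), hderivG]
    have hIoi : Ioi (0:ℝ) ∈ nhds ρ₀ := Ioi_mem_nhds hρ₀0
    have hev : deriv h =ᶠ[nhds ρ₀] fun y => deriv F y - G1 y :=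
      Filter.eventuallyEq_of_mem hIoi hderiv_eq
    have hd1 : deriv h ρ₀ = 0 := hlocal.deriv_eq_zero
    have hdF : deriv F ρ₀ = G1 ρ₀ := by
      have := hderiv_eq ρ₀ hρ₀0
      rw [hd1] at this
      linarith
    have hdiffh : ∀ᶠ y in nhds ρ₀, DifferentiableAt ℝ h y := by
      filter_upwards [hIoi] with y hy
      exact ((hdiff y hy).1.sub (hGdiff y))
    have hdiffh' : DifferentiableAt ℝ (deriv h) ρ₀ := by
      rw [Filter.EventuallyEq.differentiableAt_iff hev]
      exact ((hdiff ρ₀ hρ₀0).2.sub (hG1diff ρ₀))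
    have hd2 : deriv (deriv h) ρ₀ ≤ 0 :=
      deriv2_nonpos_of_isLocalMax hdiffh hdiffh' hlocal
    have hd2eq : deriv (deriv h) ρ₀ = deriv (deriv F) ρ₀ - G2 ρ₀ := by
      rw [hev.deriv_eq, deriv_fun_sub (hdiff ρ₀ hρ₀0).2 (hG1diff ρ₀), hderivG1]
    have hFineq := hineq ρ₀ hρ₀1.le
    have hGineq := hcomp ρ₀ hρ₀1.le
    -- combine
    have : μ * F ρ₀ ≤ μ * G ρ₀ := by
      rw [hd2eq] at hd2
      rw [hdF] at hFineq
      clear_value G G1 G2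
      linarith
    have hFG : F ρ₀ ≤ G ρ₀ := le_of_mul_le_mul_left this hμ
    simp only [hh_def] at hmax2
    linarith
  have hfinal := key ρ hρ
  have : ε * Real.exp (c * ρ) = δ := by
    rw [hε_def, div_mul_cancel₀]
    exact (Real.exp_pos _).ne'
  simp only [hG_def] at hfinal
  linarith


open Real Filter Set Topology

theorem toda_norm_squared_exponential_decay (K : ℕ) (hK : 2 ≤ K)
    (u : Fin K → ℝ → ℝ)
    (hdiff : ∀ i, ∀ ρ : ℝ, 0 < ρ →
      DifferentiableAt ℝ (u i) ρ ∧ DifferentiableAt ℝ (deriv (u i)) ρ)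
    (htoda : ∀ i, ∀ ρ : ℝ, 0 < ρ →
      deriv (deriv (u i)) ρ + (1 / ρ) * deriv (u i) ρ
        = Real.exp (u i ρ - u (cycSucc i) ρ) - Real.exp (u (cycPred i) ρ - u i ρ))
    (hsum : ∀ ρ : ℝ, 0 < ρ → ∑ i, u i ρ = 0)
    (hbdd : ∀ i, ∃ C : ℝ, ∀ ρ : ℝ, 1 ≤ ρ → |u i ρ| ≤ C) :
    ∃ C : ℝ, 0 < C ∧ ∃ c : ℝ, 0 < c ∧ ∃ R : ℝ, 0 < R ∧
      ∀ ρ : ℝ, R ≤ ρ → ∑ i, (u i ρ) ^ 2 ≤ C * Real.exp (-c * ρ) := by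
  -- uniform bound B
  choose Cb hCb using hbdd
  set B : ℝ := 1 + ∑ i, |Cb i| with hB_def
  have hB1 : 1 ≤ B := by
    have : 0 ≤ ∑ i, |Cb i| := Finset.sum_nonneg fun i _ => abs_nonneg _
    simp only [hB_def]; linarith
  have hB0 : 0 < B := by linarith
  have hBu : ∀ i, ∀ ρ : ℝ, 1 ≤ ρ → |u i ρ| ≤ B := by
    intro i ρ hρ
    have h1 := hCb i ρ hρ
    have h2 : Cb i ≤ |Cb i| := le_abs_self _
    have h3 : |Cb i| ≤ ∑ j, |Cb j| :=
      Finset.single_le_sum (f := fun j => |Cb j|) (fun j _ => abs_nonneg _) (Finset.mem_univ i)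
    simp only [hB_def]; linarith
  -- constants
  have hKpos : (0:ℝ) < (K:ℝ) := by
    have : (0:ℕ) < K := by omega
    exact_mod_cast this
  set μ : ℝ := 2 * Real.exp (-(2 * B)) / (K:ℝ)^2 with hμ_def
  have hμ : 0 < μ := by
    have := Real.exp_pos (-(2*B))
    positivity
  set M : ℝ := (K:ℝ) * B^2 with hM_def
  have hM : 0 < M := by positivity
  set c : ℝ := min 1 (μ/2) with hc_def
  have hc : 0 < c := lt_min one_pos (by positivity)
  have hc2 : c^2 + c ≤ μ := by
    have h1 : c ≤ 1 := min_le_left _ _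
    have h2 : c ≤ μ/2 := min_le_right _ _
    nlinarith
  -- the function F and its derivatives
  set F : ℝ → ℝ := fun ρ => ∑ i, u i ρ ^ 2 with hF_def
  set F1 : ℝ → ℝ := fun ρ => ∑ i, 2 * u i ρ * deriv (u i) ρ with hF1_def
  set F2 : ℝ → ℝ := fun ρ =>
    ∑ i, 2 * (deriv (u i) ρ * deriv (u i) ρ + u i ρ * deriv (deriv (u i)) ρ) with hF2_def
  have hFd : ∀ ρ : ℝ, 0 < ρ → HasDerivAt F (F1 ρ) ρ := by
    intro ρ hρ
    have : HasDerivAt F (∑ i, (2:ℕ) * u i ρ ^ 1 * deriv (u i) ρ) ρ := by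
      apply HasDerivAt.fun_sum
      intro i _
      exact ((hdiff i ρ hρ).1.hasDerivAt).pow 2
    simpa [pow_one] using this
  have hF1d : ∀ ρ : ℝ, 0 < ρ → HasDerivAt F1 (F2 ρ) ρ := by
    intro ρ hρ
    apply HasDerivAt.fun_sum
    intro i _
    have hm : HasDerivAt (fun t => u i t * deriv (u i) t)
        (deriv (u i) ρ * deriv (u i) ρ + u i ρ * deriv (deriv (u i)) ρ) ρ :=
      ((hdiff i ρ hρ).1.hasDerivAt).mul ((hdiff i ρ hρ).2.hasDerivAt)
    have := hm.const_mul (2:ℝ)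
    simpa [mul_assoc] using this
  have hderivF : ∀ ρ ∈ Ioi (0:ℝ), deriv F ρ = F1 ρ := fun ρ hρ => (hFd ρ hρ).deriv
  have hevF : ∀ ρ : ℝ, 0 < ρ → deriv F =ᶠ[nhds ρ] F1 := fun ρ hρ =>
    Filter.eventuallyEq_of_mem (Ioi_mem_nhds hρ) hderivF
  have hFdiff : ∀ ρ : ℝ, 0 < ρ → DifferentiableAt ℝ F ρ ∧ DifferentiableAt ℝ (deriv F) ρ := by
    intro ρ hρ
    refine ⟨(hFd ρ hρ).differentiableAt, ?_⟩
    rw [Filter.EventuallyEq.differentiableAt_iff (hevF ρ hρ)]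
    exact (hF1d ρ hρ).differentiableAt
  have hderiv2F : ∀ ρ : ℝ, 0 < ρ → deriv (deriv F) ρ = F2 ρ := by
    intro ρ hρ
    rw [(hevF ρ hρ).deriv_eq]
    exact (hF1d ρ hρ).deriv
  -- the differential inequality
  have hineq : ∀ ρ : ℝ, 1 ≤ ρ → μ * F ρ ≤ deriv (deriv F) ρ + (1/ρ) * deriv F ρ := by
    intro ρ hρ
    have hρ0 : 0 < ρ := lt_of_lt_of_le one_pos hρ
    rw [hderiv2F ρ hρ0, hderivF ρ hρ0]
    -- rewrite RHS as a single sum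
    have hsplit : F2 ρ + (1/ρ) * F1 ρ
        = ∑ i, (2 * deriv (u i) ρ ^ 2
            + 2 * u i ρ * (deriv (deriv (u i)) ρ + (1/ρ) * deriv (u i) ρ)) := by
      simp only [hF2_def, hF1_def, Finset.mul_sum, ← Finset.sum_add_distrib]
      refine Finset.sum_congr rfl (fun i _ => by ring)
    rw [hsplit]
    have htoda' : ∀ i : Fin K, deriv (deriv (u i)) ρ + (1/ρ) * deriv (u i) ρ
        = Real.exp (u i ρ - u (cycSucc i) ρ) - Real.exp (u (cycPred i) ρ - u i ρ) :=
      fun i => htoda i ρ hρ0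
    have hstep1 : ∑ i, (2 * deriv (u i) ρ ^ 2
            + 2 * u i ρ * (deriv (deriv (u i)) ρ + (1/ρ) * deriv (u i) ρ))
        = ∑ i, 2 * deriv (u i) ρ ^ 2
          + ∑ i, 2 * u i ρ * (Real.exp (u i ρ - u (cycSucc i) ρ)
              - Real.exp (u (cycPred i) ρ - u i ρ)) := by
      rw [← Finset.sum_add_distrib]
      refine Finset.sum_congr rfl (fun i _ => by rw [htoda' i])
    rw [hstep1]
    -- reindex the second exponential
    have hreindex : ∑ i, u i ρ * Real.exp (u (cycPred i) ρ - u i ρ)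
        = ∑ i, u (cycSucc i) ρ * Real.exp (u i ρ - u (cycSucc i) ρ) := by
      rw [← sum_cycSucc (fun j => u j ρ * Real.exp (u (cycPred j) ρ - u j ρ))]
      refine Finset.sum_congr rfl (fun i _ => by rw [cycPred_cycSucc])
    have hmain : ∑ i, 2 * u i ρ * (Real.exp (u i ρ - u (cycSucc i) ρ)
              - Real.exp (u (cycPred i) ρ - u i ρ))
        = 2 * ∑ i, (u i ρ - u (cycSucc i) ρ) * Real.exp (u i ρ - u (cycSucc i) ρ) := by
      rw [Finset.mul_sum]
      have expand : ∀ i : Fin K, 2 * u i ρ * (Real.exp (u i ρ - u (cycSucc i) ρ)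
              - Real.exp (u (cycPred i) ρ - u i ρ))
          = 2 * (u i ρ * Real.exp (u i ρ - u (cycSucc i) ρ))
            - 2 * (u i ρ * Real.exp (u (cycPred i) ρ - u i ρ)) := fun i => by ring
      rw [Finset.sum_congr rfl (fun i _ => expand i), Finset.sum_sub_distrib,
        ← Finset.mul_sum, ← Finset.mul_sum, hreindex, Finset.mul_sum, Finset.mul_sum,
        ← Finset.sum_sub_distrib]
      refine Finset.sum_congr rfl (fun i _ => by ring)
    rw [hmain]
    -- sum of differences is zero
    have hzero : ∑ i, (u i ρ - u (cycSucc i) ρ) = 0 := by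
      rw [Finset.sum_sub_distrib, sum_cycSucc (fun j => u j ρ), sub_self]
    -- lower bound for the exponential sum
    have hlow : ∀ i : Fin K, Real.exp (-(2*B)) * (u i ρ - u (cycSucc i) ρ)^2
        ≤ (u i ρ - u (cycSucc i) ρ) * (Real.exp (u i ρ - u (cycSucc i) ρ) - 1) := by
      intro i
      apply x_mul_exp_sub_one
      have h1 := hBu i ρ hρ
      have h2 := hBu (cycSucc i) ρ hρ
      have := abs_sub (u i ρ) (u (cycSucc i) ρ)
      calc |u i ρ - u (cycSucc i) ρ| ≤ |u i ρ| + |u (cycSucc i) ρ| := abs_sub _ _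
        _ ≤ 2 * B := by linarith
    have hsum_exp : Real.exp (-(2*B)) * ∑ i, (u i ρ - u (cycSucc i) ρ)^2
        ≤ ∑ i, (u i ρ - u (cycSucc i) ρ) * Real.exp (u i ρ - u (cycSucc i) ρ) := by
      have expand2 : ∑ i, (u i ρ - u (cycSucc i) ρ) * Real.exp (u i ρ - u (cycSucc i) ρ)
          = (∑ i, (u i ρ - u (cycSucc i) ρ) * (Real.exp (u i ρ - u (cycSucc i) ρ) - 1))
            + ∑ i, (u i ρ - u (cycSucc i) ρ) := by
        rw [← Finset.sum_add_distrib]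
        refine Finset.sum_congr rfl (fun i _ => by ring)
      rw [expand2, hzero, add_zero, Finset.mul_sum]
      exact Finset.sum_le_sum (fun i _ => hlow i)
    -- Poincaré inequality
    have hpoin : F ρ ≤ (K:ℝ)^2 * ∑ i, (u i ρ - u (cycSucc i) ρ)^2 := by
      have := poincare hK (fun i => u i ρ) (hsum ρ hρ0)
      simp only [hF_def]
      calc ∑ i, u i ρ ^ 2 ≤ (K:ℝ)^2 * ∑ i, ((fun i => u i ρ) (cycSucc i) - (fun i => u i ρ) i)^2 := this
        _ = (K:ℝ)^2 * ∑ i, (u i ρ - u (cycSucc i) ρ)^2 := by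
            congr 1
            refine Finset.sum_congr rfl (fun i _ => by ring)
    -- combine everything
    have hsq : 0 ≤ ∑ i, 2 * deriv (u i) ρ ^ 2 :=
      Finset.sum_nonneg (fun i _ => by positivity)
    have hμF : μ * F ρ ≤ 2 * Real.exp (-(2*B)) * ∑ i, (u i ρ - u (cycSucc i) ρ)^2 := by
      have hKsq : (0:ℝ) < (K:ℝ)^2 := by positivity
      have := mul_le_mul_of_nonneg_left hpoin (le_of_lt hμ)
      calc μ * F ρ ≤ μ * ((K:ℝ)^2 * ∑ i, (u i ρ - u (cycSucc i) ρ)^2) := this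
        _ = 2 * Real.exp (-(2*B)) * ∑ i, (u i ρ - u (cycSucc i) ρ)^2 := by
            rw [hμ_def]
            field_simp
    calc μ * F ρ ≤ 2 * Real.exp (-(2*B)) * ∑ i, (u i ρ - u (cycSucc i) ρ)^2 := hμF
      _ ≤ 2 * ∑ i, (u i ρ - u (cycSucc i) ρ) * Real.exp (u i ρ - u (cycSucc i) ρ) := by
          have := mul_le_mul_of_nonneg_left hsum_exp (by norm_num : (0:ℝ) ≤ 2)
          calc 2 * Real.exp (-(2*B)) * ∑ i, (u i ρ - u (cycSucc i) ρ)^2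
              = 2 * (Real.exp (-(2*B)) * ∑ i, (u i ρ - u (cycSucc i) ρ)^2) := by ring
            _ ≤ 2 * ∑ i, (u i ρ - u (cycSucc i) ρ) * Real.exp (u i ρ - u (cycSucc i) ρ) := this
      _ ≤ ∑ i, 2 * deriv (u i) ρ ^ 2
          + 2 * ∑ i, (u i ρ - u (cycSucc i) ρ) * Real.exp (u i ρ - u (cycSucc i) ρ) := by
          linarith
  -- boundedness of F
  have hFbound : ∀ ρ : ℝ, 1 ≤ ρ → F ρ ≤ M := by
    intro ρ hρ
    simp only [hF_def, hM_def]
    calc ∑ i, u i ρ ^ 2 ≤ ∑ _i : Fin K, B^2 := by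
          refine Finset.sum_le_sum (fun i _ => ?_)
          rw [← sq_abs (u i ρ)]
          exact pow_le_pow_left₀ (abs_nonneg _) (hBu i ρ hρ) 2
      _ = (K:ℝ) * B^2 := by
          rw [Finset.sum_const, Finset.card_univ, Fintype.card_fin, nsmul_eq_mul]
  -- apply the comparison lemma
  have hfinal := decay_of_diff_ineq hμ hM hc hc2 hFdiff hineq hFbound
  refine ⟨M * Real.exp c, by positivity, c, hc, 1, one_pos, ?_⟩
  intro ρ hρ
  exact hfinal ρ hρ
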